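/- arXiv:math/0610286 — 2 statements merged into one kernel-verified Lean document; each statement's English description precedes it below -/
import Mathlib

section
/- For every prime p, v_{p^2+1} ≡ -1 (mod p) and v_{p^2+2} ≡ -1 (mod p). -/
open Polynomial Finset

noncomputable def v (n : ℕ) : ℤ :=
  if n = 0 then -1 else
  ((1 - X) * ∏ j ∈ Finset.range (2 * n - 2),
      (C ((2 * n : ℤ) - 3 - (j : ℤ)) + C (j : ℤ) * X)).coeff (n - 1)

namespace VAux

variable (p : ℕ) [hp : Fact p.Prime]

lemma prod_univ_X_sub_C : ∏ a : ZMod p, (X - C a) = X ^ p - X := by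
  have hm : (X ^ p - X : (ZMod p)[X]).Monic := by
    apply (monic_X_pow p).sub_of_left
    rw [degree_X, degree_X_pow]
    exact_mod_cast hp.out.one_lt
  have hr : (X ^ p - X : (ZMod p)[X]).roots = Finset.univ.val := by
    have h := FiniteField.roots_X_pow_card_sub_X (ZMod p)
    rwa [ZMod.card] at h
  have hcard : (X ^ p - X : (ZMod p)[X]).roots.card
      = (X ^ p - X : (ZMod p)[X]).natDegree := by
    rw [hr, FiniteField.X_pow_card_sub_X_natDegree_eq _ hp.out.one_lt]
    rw [← Finset.card_def, Finset.card_univ, ZMod.card]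
  have h := prod_multiset_X_sub_C_of_monic_of_roots_card_eq hm hcard
  rw [hr] at h
  exact h

lemma prod_erase_zero : ∏ a ∈ (univ : Finset (ZMod p)).erase 0, a = -1 := by
  have h : ∏ x : (ZMod p)ˣ, (x : ZMod p)
      = ∏ a ∈ (univ : Finset (ZMod p)).erase 0, a := by
    refine Finset.prod_bij (fun x _ => (x : ZMod p)) ?_ ?_ ?_ ?_
    · intro x _
      exact Finset.mem_erase.mpr ⟨Units.ne_zero x, Finset.mem_univ _⟩
    · intro a _ b _ hab
      exact Units.ext hab
    · intro b hb
      exact ⟨Units.mk0 b (Finset.mem_erase.mp hb).1, Finset.mem_univ _, rfl⟩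
    · intro x _
      rfl
  rw [← h]
  simp_rw [← Units.coeHom_apply]
  rw [← map_prod (Units.coeHom (ZMod p))]
  simp_rw [FiniteField.prod_univ_units_id_eq_neg_one, Units.coeHom_apply, Units.val_neg,
    Units.val_one]

lemma key2 : (∏ a : ZMod p, (C a * X - 1)) * X = X ^ p - X := by
  have e0 : (0 : ZMod p) ∈ (univ : Finset (ZMod p)) := Finset.mem_univ _
  have h1 : ∏ a ∈ (univ : Finset (ZMod p)).erase 0, (C a * X - 1)
      = ∏ a ∈ (univ : Finset (ZMod p)).erase 0, (C a * (X - C a⁻¹)) := by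
    refine Finset.prod_congr rfl fun a ha => ?_
    have ha0 : a ≠ 0 := (Finset.mem_erase.mp ha).1
    rw [mul_sub, ← C_mul, mul_inv_cancel₀ ha0, C_1]
  have h2 : ∏ a ∈ (univ : Finset (ZMod p)).erase 0, (X - C a⁻¹)
      = ∏ a ∈ (univ : Finset (ZMod p)).erase 0, (X - C a) := by
    refine Finset.prod_nbij (fun a => a⁻¹) ?_ ?_ ?_ ?_
    · intro a ha
      exact Finset.mem_erase.mpr ⟨inv_ne_zero (Finset.mem_erase.mp ha).1,
        Finset.mem_univ _⟩
    · exact fun a _ b _ hab => inv_injective hab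
    · intro b hb
      refine ⟨b⁻¹, ?_, inv_inv b⟩
      simp only [Finset.coe_erase, Set.mem_diff, Set.mem_singleton_iff]
      exact ⟨Finset.mem_coe.mpr (Finset.mem_univ _),
        inv_ne_zero (Finset.mem_erase.mp hb).1⟩
    · intro a _
      rfl
  have h3 : ∏ a : ZMod p, (C a * X - 1)
      = ∏ a ∈ (univ : Finset (ZMod p)).erase 0, (X - C a) := by
    have hC : ∏ x ∈ (univ : Finset (ZMod p)).erase 0, (C x : (ZMod p)[X]) = C (-1) := by
      rw [← map_prod (C : ZMod p →+* (ZMod p)[X]) (fun a => a)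
        ((univ : Finset (ZMod p)).erase 0), prod_erase_zero]
    rw [← Finset.mul_prod_erase _ _ e0, h1, Finset.prod_mul_distrib, h2, hC,
      C_0, zero_mul, zero_sub, map_neg, C_1]
    ring
  have h4 : (∏ a ∈ (univ : Finset (ZMod p)).erase 0, (X - C a)) * X
      = X ^ p - X := by
    rw [← prod_univ_X_sub_C p, ← Finset.mul_prod_erase _ _ e0]
    simp [mul_comm]
  rw [h3, h4]

lemma key3 : (∏ a : ZMod p, (C a * (X - 1) - 1)) * (X - 1) = X ^ p - X := by
  have h := congrArg (fun q : (ZMod p)[X] => q.comp (X - 1)) (key2 p)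
  simp only [mul_comp, Polynomial.prod_comp, sub_comp, C_comp, X_comp, one_comp,
    pow_comp] at h
  rw [h, sub_pow_char, one_pow]
  ring

lemma g_eq : (∏ a : ZMod p, (C a * (X - 1) - 1))
    = (∑ i ∈ range p, (X : (ZMod p)[X]) ^ i) - 1 := by
  have hX : ((X : (ZMod p)[X]) - 1) ≠ 0 := by
    have := X_sub_C_ne_zero (1 : ZMod p)
    rwa [C_1] at this
  refine mul_right_cancel₀ hX ?_
  rw [key3, sub_mul, geom_sum_mul, one_mul]
  ring

lemma coeff_S (k : ℕ) : (∑ i ∈ range p, (X : (ZMod p)[X]) ^ i).coeff k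
    = if k < p then 1 else 0 := by
  rw [finset_sum_coeff]
  simp only [coeff_X_pow]
  rw [Finset.sum_ite_eq (range p) k (fun _ => (1 : ZMod p))]
  simp [Finset.mem_range]

lemma coeff_g (k : ℕ) : ((∑ i ∈ range p, (X : (ZMod p)[X]) ^ i) - 1).coeff k
    = (if k < p then 1 else 0) - (if k = 0 then 1 else 0) := by
  rw [coeff_sub, coeff_S, coeff_one]

lemma coeff_g_sq :
    (((∑ i ∈ range p, (X : (ZMod p)[X]) ^ i) - 1)
      * ((∑ i ∈ range p, (X : (ZMod p)[X]) ^ i) - 1)).coeff p = -1 := by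
  have h2 : 2 ≤ p := hp.out.two_le
  set g : (ZMod p)[X] := (∑ i ∈ range p, (X : (ZMod p)[X]) ^ i) - 1 with hg
  have hg0 : g.coeff 0 = 0 := by rw [coeff_g]; simp [hp.out.pos]
  have hgp : g.coeff p = 0 := by rw [coeff_g]; simp [hp.out.pos.ne']
  have hgk : ∀ k, 1 ≤ k → k < p → g.coeff k = 1 := by
    intro k h1 h2
    rw [coeff_g, if_pos h2, if_neg (by omega)]
    ring
  rw [coeff_mul, Finset.Nat.sum_antidiagonal_eq_sum_range_succ_mk]
  rw [Finset.sum_range_succ, Nat.sub_self, hgp, zero_mul, add_zero]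
  have h0mem : (0 : ℕ) ∈ range p := Finset.mem_range.mpr hp.out.pos
  rw [← Finset.add_sum_erase _ _ h0mem, hg0, zero_mul, zero_add]
  have hterm : ∀ i ∈ (range p).erase 0, g.coeff i * g.coeff (p - i) = 1 := by
    intro i hi
    have hi1 : i ≠ 0 := (Finset.mem_erase.mp hi).1
    have hi2 : i < p := Finset.mem_range.mp (Finset.mem_erase.mp hi).2
    rw [hgk i (by omega) (by omega), hgk (p - i) (by omega) (by omega)]
    ring
  rw [Finset.sum_congr rfl hterm, Finset.sum_const, Finset.card_erase_of_mem h0mem,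
    Finset.card_range, nsmul_eq_mul, mul_one, Nat.cast_sub hp.out.one_le,
    ZMod.natCast_self]
  push_cast
  ring

lemma core :
    ((1 - X) * ((((∑ i ∈ range p, (X : (ZMod p)[X]) ^ i) - 1)
      * ((∑ i ∈ range p, (X : (ZMod p)[X]) ^ i) - 1)) ^ p)).coeff (p ^ 2) = -1 := by
  set q : (ZMod p)[X] := ((∑ i ∈ range p, (X : (ZMod p)[X]) ^ i) - 1)
      * ((∑ i ∈ range p, (X : (ZMod p)[X]) ^ i) - 1) with hqdef
  have hq : q ^ p = expand (ZMod p) p q := by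
    have h := Polynomial.map_frobenius_expand p q
    rw [ZMod.frobenius_zmod, Polynomial.map_id] at h
    exact h.symm
  have hp2 : p ^ 2 = (p ^ 2 - 1) + 1 := by
    have := hp.out.two_le
    have : 1 ≤ p ^ 2 := Nat.one_le_pow _ _ hp.out.pos
    omega
  rw [hq, sub_mul, one_mul, coeff_sub]
  rw [hp2, coeff_X_mul, ← hp2]
  rw [coeff_expand hp.out.pos, coeff_expand hp.out.pos]
  have hnd : ¬ p ∣ p ^ 2 - 1 := by
    intro hdvd
    have h1 : p ∣ p ^ 2 := dvd_pow_self p two_ne_zero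
    have h2 := Nat.dvd_sub h1 hdvd
    rw [Nat.sub_sub_self (Nat.one_le_pow _ _ hp.out.pos)] at h2
    have h3 := Nat.le_of_dvd one_pos h2
    have h4 := hp.out.two_le
    omega
  rw [if_pos (dvd_pow_self p two_ne_zero), if_neg hnd, pow_two,
    Nat.mul_div_cancel_left _ hp.out.pos, hqdef, coeff_g_sq]
  ring

lemma prod_range_cast {M : Type*} [CommMonoid M] (f : ZMod p → M) :
    ∏ j ∈ range p, f ((j : ℕ) : ZMod p) = ∏ a : ZMod p, f a := by
  haveI : NeZero p := ⟨hp.out.pos.ne'⟩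
  refine Finset.prod_nbij (fun j => ((j : ℕ) : ZMod p)) (fun j _ => Finset.mem_univ _)
    ?_ ?_ (fun j _ => rfl)
  · intro a ha b hb hab
    have ha' := Finset.mem_range.mp (Finset.mem_coe.mp ha)
    have hb' := Finset.mem_range.mp (Finset.mem_coe.mp hb)
    have h := congrArg ZMod.val hab
    rwa [ZMod.val_cast_of_lt ha', ZMod.val_cast_of_lt hb'] at h
  · intro a _
    exact ⟨a.val, Finset.mem_coe.mpr (Finset.mem_range.mpr (ZMod.val_lt a)),
      ZMod.natCast_rightInverse a⟩

lemma prod_periodic (f : ZMod p → (ZMod p)[X]) (k : ℕ) :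
    ∏ j ∈ range (k * p), f ((j : ℕ) : ZMod p) = (∏ a : ZMod p, f a) ^ k := by
  induction k with
  | zero => simp
  | succ k ih =>
    rw [Nat.succ_mul, Finset.prod_range_add, ih, pow_succ]
    congr 1
    rw [← prod_range_cast p f]
    refine Finset.prod_congr rfl fun j _ => ?_
    congr 1
    push_cast [ZMod.natCast_self]
    ring

lemma prod_H : (∏ a : ZMod p, (C a * (X - 1) + 1))
    = - ∏ a : ZMod p, (C a * (X - 1) - 1) := by
  have h1 : (∏ a : ZMod p, (C a * (X - 1) + 1))
      = ∏ a : ZMod p, (C (-a) * (X - 1) + 1) :=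
    Fintype.prod_equiv (Equiv.neg (ZMod p)) _ _
      (fun a => by rw [Equiv.neg_apply, neg_neg])
  rw [h1]
  have h2 : ∀ a : ZMod p, (C (-a) : (ZMod p)[X]) * (X - 1) + 1
      = (-1) * (C a * (X - 1) - 1) := by
    intro a; rw [map_neg]; ring
  simp_rw [h2]
  rw [Finset.prod_mul_distrib, Finset.prod_const, Finset.card_univ, ZMod.card,
    neg_one_pow_char, neg_one_mul]

end VAux

open VAux in
theorem v_p_sq_add (p : ℕ) (hp : p.Prime) :
    v (p ^ 2 + 1) ≡ -1 [ZMOD (p : ℤ)] ∧ v (p ^ 2 + 2) ≡ -1 [ZMOD (p : ℤ)] := by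
  haveI : Fact p.Prime := ⟨hp⟩
  have hmap : ∀ (q : ℤ[X]) (n : ℕ),
      ((q.coeff n : ℤ) : ZMod p) = (q.map (Int.castRingHom (ZMod p))).coeff n := by
    intro q n
    simp [Polynomial.coeff_map]
  constructor
  · rw [← ZMod.intCast_eq_intCast_iff]
    rw [Int.cast_neg, Int.cast_one]
    simp only [v, if_neg (show ¬ p ^ 2 + 1 = 0 by omega)]
    rw [hmap]
    have hidx1 : p ^ 2 + 1 - 1 = p ^ 2 := by omega
    rw [hidx1]
    have hP : (((1 - X) * ∏ j ∈ Finset.range (2 * (p ^ 2 + 1) - 2),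
        (C (2 * ((p ^ 2 + 1 : ℕ) : ℤ) - 3 - (j : ℤ)) + C (j : ℤ) * X)).map
          (Int.castRingHom (ZMod p)))
        = (1 - X) * ∏ j ∈ Finset.range (2 * (p ^ 2 + 1) - 2),
            (C ((j : ZMod p)) * (X - 1) - 1) := by
      rw [Polynomial.map_mul, Polynomial.map_sub, Polynomial.map_one, Polynomial.map_X,
        Polynomial.map_prod]
      congr 1
      refine Finset.prod_congr rfl fun j _ => ?_
      rw [Polynomial.map_add, Polynomial.map_mul, Polynomial.map_C, Polynomial.map_C,
        Polynomial.map_X]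
      simp only [eq_intCast]
      have h1 : (((2 * ((p ^ 2 + 1 : ℕ) : ℤ) - 3 - (j : ℤ)) : ℤ) : ZMod p)
          = -1 - (j : ZMod p) := by
        push_cast
        rw [ZMod.natCast_self]
        ring
      have h2 : (((j : ℤ) : ZMod p)) = (j : ZMod p) := by push_cast; rfl
      rw [h1, h2, map_sub, map_neg, map_one]
      ring
    rw [hP]
    have hidx2 : 2 * (p ^ 2 + 1) - 2 = 2 * p * p := by
      have h : 2 * (p ^ 2 + 1) = 2 * p * p + 2 := by ring
      rw [h, Nat.add_sub_cancel]
    rw [hidx2, prod_periodic p (fun a => C a * (X - 1) - 1) (2 * p), pow_mul, pow_two,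
      g_eq p, core p]
  · rw [← ZMod.intCast_eq_intCast_iff]
    rw [Int.cast_neg, Int.cast_one]
    simp only [v, if_neg (show ¬ p ^ 2 + 2 = 0 by omega)]
    rw [hmap]
    have hidx1 : p ^ 2 + 2 - 1 = p ^ 2 + 1 := by omega
    rw [hidx1]
    have hP : (((1 - X) * ∏ j ∈ Finset.range (2 * (p ^ 2 + 2) - 2),
        (C (2 * ((p ^ 2 + 2 : ℕ) : ℤ) - 3 - (j : ℤ)) + C (j : ℤ) * X)).map
          (Int.castRingHom (ZMod p)))
        = (1 - X) * ∏ j ∈ Finset.range (2 * (p ^ 2 + 2) - 2),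
            (C ((j : ZMod p)) * (X - 1) + 1) := by
      rw [Polynomial.map_mul, Polynomial.map_sub, Polynomial.map_one, Polynomial.map_X,
        Polynomial.map_prod]
      congr 1
      refine Finset.prod_congr rfl fun j _ => ?_
      rw [Polynomial.map_add, Polynomial.map_mul, Polynomial.map_C, Polynomial.map_C,
        Polynomial.map_X]
      simp only [eq_intCast]
      have h1 : (((2 * ((p ^ 2 + 2 : ℕ) : ℤ) - 3 - (j : ℤ)) : ℤ) : ZMod p)
          = 1 - (j : ZMod p) := by
        push_cast
        rw [ZMod.natCast_self]
        ring
      have h2 : (((j : ℤ) : ZMod p)) = (j : ZMod p) := by push_cast; rfl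
      rw [h1, h2, map_sub, map_one]
      ring
    rw [hP]
    have hidx2 : 2 * (p ^ 2 + 2) - 2 = 2 * p * p + 2 := by
      have h : 2 * (p ^ 2 + 2) = (2 * p * p + 2) + 2 := by ring
      rw [h, Nat.add_sub_cancel]
    rw [hidx2, Finset.prod_range_add,
      prod_periodic p (fun a => C a * (X - 1) + 1) (2 * p)]
    have hlast : ∏ j ∈ Finset.range 2,
        (C (((2 * p * p + j : ℕ) : ZMod p)) * (X - 1) + 1) = X := by
      rw [Finset.prod_range_succ, Finset.prod_range_one]
      have e0 : (((2 * p * p + 0 : ℕ) : ZMod p)) = 0 := by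
        push_cast [ZMod.natCast_self]; ring
      have e1 : (((2 * p * p + 1 : ℕ) : ZMod p)) = 1 := by
        push_cast [ZMod.natCast_self]; ring
      rw [e0, e1, map_zero, map_one]
      ring
    rw [hlast, prod_H p]
    have hpow : (-(∏ a : ZMod p, (C a * (X - 1) - 1))) ^ (2 * p)
        = ((∏ a : ZMod p, (C a * (X - 1) - 1)) * ∏ a : ZMod p, (C a * (X - 1) - 1)) ^ p := by
      rw [Even.neg_pow (even_two_mul p), pow_mul, pow_two]
    rw [hpow, g_eq p]
    have hre : (1 - X) * ((((∑ i ∈ range p, (X : (ZMod p)[X]) ^ i) - 1)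
          * ((∑ i ∈ range p, (X : (ZMod p)[X]) ^ i) - 1)) ^ p * X)
        = X * ((1 - X) * ((((∑ i ∈ range p, (X : (ZMod p)[X]) ^ i) - 1)
          * ((∑ i ∈ range p, (X : (ZMod p)[X]) ^ i) - 1)) ^ p)) := by
      ring
    rw [hre, coeff_X_mul, core p]
end

section
/- For every prime p, v_{p^2+p+1} ≡ -1 (mod p) and v_{p^2+p+2} ≡ -1 (mod p). -/
open Polynomial Finset

section Aux

variable (p : ℕ) [hpf : Fact p.Prime]

/-- The basic block polynomial `B = ∑_{i=1}^{p-1} X^i` over `ZMod p`. -/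
noncomputable def Bp : (ZMod p)[X] := ∑ i ∈ Finset.Ico 1 p, X ^ i

lemma one_sub_X_mul_Bp : (1 - X) * Bp p = X - X ^ p := by
  have hp1 : 0 < p := hpf.out.pos
  have h1 : (∑ i ∈ range p, (X : (ZMod p)[X]) ^ i) = 1 + Bp p := by
    rw [Bp, range_eq_Ico, Finset.sum_eq_sum_Ico_succ_bot hp1]
    simp
  have h2 := geom_sum_mul (X : (ZMod p)[X]) p
  rw [h1] at h2
  linear_combination -h2

lemma one_sub_X_ne_zero : (1 - X : (ZMod p)[X]) ≠ 0 := by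
  intro h
  have := congrArg (fun q : (ZMod p)[X] => q.coeff 1) h
  simp [Polynomial.coeff_one] at this

lemma prod_univ_X_sub_C : ∏ a : ZMod p, (X - C a) = X ^ p - X := by
  have hp1 : 1 < p := hpf.out.one_lt
  have hq : Fintype.card (ZMod p) = p := ZMod.card p
  have hroots := FiniteField.roots_X_pow_card_sub_X (ZMod p)
  rw [hq] at hroots
  have hm : (X ^ p - X : (ZMod p)[X]).Monic := by
    apply (monic_X_pow p).sub_of_left
    rw [degree_X_pow, degree_X]
    exact_mod_cast hp1
  have hdeg := FiniteField.X_pow_card_sub_X_natDegree_eq (ZMod p) hp1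
  have hcard : Multiset.card (X ^ p - X : (ZMod p)[X]).roots
      = (X ^ p - X : (ZMod p)[X]).natDegree := by
    rw [hroots, hdeg]
    simpa using hq
  have := prod_multiset_X_sub_C_of_monic_of_roots_card_eq hm hcard
  rw [hroots] at this
  rw [← this]
  rfl

lemma block_prod {c : ZMod p} (hc : c ≠ 0) :
    ∏ j ∈ range p, (C (c - (j : ZMod p)) + C (j : ZMod p) * X) = C (-c) * Bp p := by
  have hp1 : 0 < p := hpf.out.pos
  haveI : NeZero p := ⟨hpf.out.ne_zero⟩
  apply mul_left_cancel₀ (one_sub_X_ne_zero p)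
  have hrhs : (1 - X) * (C (-c) * Bp p) = C (-c) * ((1 - X) * Bp p) := by ring
  rw [hrhs, one_sub_X_mul_Bp]
  -- split off the `j = 0` factor
  rw [range_eq_Ico, Finset.prod_eq_prod_Ico_succ_bot hp1]
  have h0 : (C (c - ((0 : ℕ) : ZMod p)) + C ((0 : ℕ) : ZMod p) * X) = C c := by
    simp
  rw [h0]
  -- rewrite each remaining factor
  have hfac : ∀ j ∈ Finset.Ico 1 p,
      (C (c - (j : ZMod p)) + C (j : ZMod p) * X)
        = C (j : ZMod p) * (X - C (((j : ZMod p) - c) * (j : ZMod p)⁻¹)) := by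
    intro j hj
    simp only [mem_Ico] at hj
    have hjne : (j : ZMod p) ≠ 0 := by
      rw [Ne, ZMod.natCast_eq_zero_iff]
      exact Nat.not_dvd_of_pos_of_lt (by omega) hj.2
    have hinv : (j : ZMod p) * (j : ZMod p)⁻¹ = 1 := ZMod.mul_inv_of_unit _ (hjne.isUnit)
    rw [mul_sub, ← C_mul]
    have h2 : (j : ZMod p) * (((j : ZMod p) - c) * (j : ZMod p)⁻¹) = (j : ZMod p) - c := by
      calc (j : ZMod p) * (((j : ZMod p) - c) * (j : ZMod p)⁻¹)
          = ((j : ZMod p) - c) * ((j : ZMod p) * (j : ZMod p)⁻¹) := by ring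
        _ = (j : ZMod p) - c := by rw [hinv, mul_one]
    rw [h2, C_sub, C_sub]
    ring
  rw [Finset.prod_congr rfl hfac, Finset.prod_mul_distrib]
  -- the product of the constants is (p-1)! = -1 by Wilson
  have hwilson : ∏ j ∈ Finset.Ico 1 p, C ((j : ZMod p)) = C (-1 : ZMod p) := by
    rw [← map_prod]
    congr 1
    rw [← Nat.cast_prod]
    have hfact : (∏ j ∈ Finset.Ico 1 p, j) = Nat.factorial (p - 1) := by
      have h := Finset.prod_Ico_id_eq_factorial (p - 1)
      have h2 : p - 1 + 1 = p := by omega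
      rwa [h2] at h
    rw [hfact, ZMod.wilsons_lemma]
  rw [hwilson]
  -- the product of the linear factors is ∏_{a ≠ 1} (X - C a)
  have hbij : ∏ j ∈ Finset.Ico 1 p, (X - C (((j : ZMod p) - c) * (j : ZMod p)⁻¹))
      = ∏ a ∈ (Finset.univ : Finset (ZMod p)).erase 1, (X - C a) := by
    apply Finset.prod_bij (i := fun j (_ : j ∈ Finset.Ico 1 p) =>
      ((j : ZMod p) - c) * (j : ZMod p)⁻¹)
    · intro j hj
      simp only [mem_Ico] at hj
      have hjne : (j : ZMod p) ≠ 0 := by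
        rw [Ne, ZMod.natCast_eq_zero_iff]
        exact Nat.not_dvd_of_pos_of_lt (by omega) hj.2
      have hinv : (j : ZMod p) * (j : ZMod p)⁻¹ = 1 := ZMod.mul_inv_of_unit _ (hjne.isUnit)
      refine Finset.mem_erase.mpr ⟨?_, Finset.mem_univ _⟩
      intro h
      apply hc
      have h2 : (j : ZMod p) - c = (j : ZMod p) := by
        calc (j : ZMod p) - c
            = (((j : ZMod p) - c) * (j : ZMod p)⁻¹) * (j : ZMod p) := by
              rw [mul_assoc, mul_comm ((j : ZMod p))⁻¹, hinv, mul_one]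
          _ = 1 * (j : ZMod p) := by rw [h]
          _ = (j : ZMod p) := one_mul _
      exact sub_eq_self.mp h2
    · intro j hj j' hj'
      simp only [mem_Ico] at hj hj'
      have hjne : (j : ZMod p) ≠ 0 := by
        rw [Ne, ZMod.natCast_eq_zero_iff]
        exact Nat.not_dvd_of_pos_of_lt (by omega) hj.2
      have hj'ne : (j' : ZMod p) ≠ 0 := by
        rw [Ne, ZMod.natCast_eq_zero_iff]
        exact Nat.not_dvd_of_pos_of_lt (by omega) hj'.2
      intro h
      have hinv : (j : ZMod p) * (j : ZMod p)⁻¹ = 1 := ZMod.mul_inv_of_unit _ (hjne.isUnit)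
      have hinv' : (j' : ZMod p) * (j' : ZMod p)⁻¹ = 1 := ZMod.mul_inv_of_unit _ (hj'ne.isUnit)
      have h1 : 1 - c * (j : ZMod p)⁻¹ = 1 - c * (j' : ZMod p)⁻¹ := by
        calc 1 - c * (j : ZMod p)⁻¹
            = ((j : ZMod p) - c) * (j : ZMod p)⁻¹ := by rw [sub_mul, hinv]
          _ = ((j' : ZMod p) - c) * (j' : ZMod p)⁻¹ := h
          _ = 1 - c * (j' : ZMod p)⁻¹ := by rw [sub_mul, hinv']
      have h2 : (j : ZMod p)⁻¹ = (j' : ZMod p)⁻¹ := by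
        have h1' := sub_right_injective h1
        exact mul_left_cancel₀ hc h1'
      have h3 : (j : ZMod p) = (j' : ZMod p) := inv_injective h2
      have h4 := congrArg ZMod.val h3
      rwa [ZMod.val_cast_of_lt hj.2, ZMod.val_cast_of_lt hj'.2] at h4
    · intro a ha
      obtain ⟨ha1, -⟩ := Finset.mem_erase.mp ha
      have hsub : (1 : ZMod p) - a ≠ 0 := sub_ne_zero.mpr (Ne.symm ha1)
      set u : ZMod p := c * ((1 : ZMod p) - a)⁻¹ with hu
      have hune : u ≠ 0 := mul_ne_zero hc (inv_ne_zero hsub)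
      refine ⟨u.val, ?_, ?_⟩
      · simp only [mem_Ico]
        constructor
        · have : u.val ≠ 0 := by
            intro h
            exact hune ((ZMod.val_eq_zero u).mp h)
          omega
        · exact ZMod.val_lt u
      · have hval : ((u.val : ℕ) : ZMod p) = u := ZMod.natCast_rightInverse u
        rw [hval]
        field_simp [hu]
        have hu1 : u * (1 - a) = c := by rw [hu, mul_assoc, inv_mul_cancel₀ hsub, mul_one]
        linear_combination hu1
    · intro j hj
      rfl
  rw [hbij]
  have herase : (X - (1 : (ZMod p)[X])) * ∏ a ∈ (Finset.univ : Finset (ZMod p)).erase 1, (X - C a)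
      = X ^ p - X := by
    have h1 := Finset.mul_prod_erase (Finset.univ : Finset (ZMod p))
      (fun a : ZMod p => X - C a) (Finset.mem_univ (1 : ZMod p))
    simp only [C_1] at h1
    rw [h1]
    exact prod_univ_X_sub_C p
  simp only [map_neg, C_1]
  linear_combination (C c) * herase

lemma prod_blocks {c : ZMod p} (hc : c ≠ 0) (k : ℕ) :
    ∏ j ∈ range (p * k), (C (c - (j : ZMod p)) + C (j : ZMod p) * X)
      = (C (-c) * Bp p) ^ k := by
  induction k with
  | zero => simp
  | succ k ih =>
    rw [Nat.mul_succ, Finset.prod_range_add, ih, pow_succ]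
    congr 1
    rw [← block_prod p hc]
    apply Finset.prod_congr rfl
    intro i _
    have h : ((p * k + i : ℕ) : ZMod p) = (i : ZMod p) := by
      push_cast [ZMod.natCast_self]
      ring
    rw [h]

lemma Bp_pow_p : (Bp p) ^ p = ∑ i ∈ Finset.Ico 1 p, X ^ (p * i) := by
  haveI : Fact p.Prime := hpf
  rw [Bp, sum_pow_char]
  apply Finset.sum_congr rfl
  intro i _
  rw [← pow_mul, mul_comm i p]

lemma main_coeff : ((1 - X) * (Bp p) ^ (2 * p + 2)).coeff (p ^ 2 + p) = (-1 : ZMod p) := by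
  have hp2 : 2 ≤ p := hpf.out.two_le
  set U : (ZMod p)[X] := (X - X ^ p) * Bp p with hUdef
  -- coefficients of U
  have hUc : ∀ r, U.coeff r
      = ∑ i ∈ Finset.Ico 1 p,
          ((if r = i + 1 then (1 : ZMod p) else 0) - (if r = i + p then 1 else 0)) := by
    intro r
    have hU2 : U = ∑ i ∈ Finset.Ico 1 p, (X ^ (i + 1) - X ^ (i + p)) := by
      rw [hUdef, Bp, Finset.mul_sum]
      apply Finset.sum_congr rfl
      intro i _
      rw [sub_mul, ← pow_succ', ← pow_add]
      ring_nf
    rw [hU2, finset_sum_coeff]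
    apply Finset.sum_congr rfl
    intro i _
    rw [coeff_sub, coeff_X_pow, coeff_X_pow]
  have hUp : U.coeff p = 1 := by
    rw [hUc]
    have hcongr : ∀ i ∈ Finset.Ico 1 p,
        ((if p = i + 1 then (1 : ZMod p) else 0) - (if p = i + p then 1 else 0))
          = if i = p - 1 then 1 else 0 := by
      intro i hi
      simp only [mem_Ico] at hi
      rw [if_neg (by omega : ¬ p = i + p), sub_zero]
      by_cases h : i = p - 1
      · rw [if_pos (by omega), if_pos h]
      · rw [if_neg (by omega), if_neg h]
    rw [Finset.sum_congr rfl hcongr, Finset.sum_ite_eq' (Finset.Ico 1 p) (p - 1)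
      (fun _ => (1 : ZMod p))]
    rw [if_pos (by simp only [mem_Ico]; omega)]
  have hU0 : ∀ r, (r = 0 ∨ 2 * p ≤ r) → U.coeff r = 0 := by
    intro r hr
    rw [hUc]
    apply Finset.sum_eq_zero
    intro i hi
    simp only [mem_Ico] at hi
    rw [if_neg (by omega), if_neg (by omega), sub_zero]
  -- expand the big power
  have hG : (1 - X) * (Bp p) ^ (2 * p + 2)
      = ∑ i ∈ Finset.Ico 1 p, ∑ i' ∈ Finset.Ico 1 p, X ^ (p * i + p * i') * U := by
    have e1 : (1 - X) * (Bp p) ^ (2 * p + 2) = ((Bp p) ^ p * (Bp p) ^ p) * U := by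
      rw [hUdef, ← one_sub_X_mul_Bp, show 2 * p + 2 = p + p + 2 by ring, pow_add, pow_add]
      ring
    rw [e1, Bp_pow_p, Finset.sum_mul_sum, Finset.sum_mul]
    apply Finset.sum_congr rfl
    intro i _
    rw [Finset.sum_mul]
    apply Finset.sum_congr rfl
    intro i' _
    rw [← pow_add]
  rw [hG, finset_sum_coeff]
  have hsq : p ^ 2 = p * p := pow_two p
  have hterm : ∀ i ∈ Finset.Ico 1 p, ∀ i' ∈ Finset.Ico 1 p,
      (X ^ (p * i + p * i') * U).coeff (p ^ 2 + p)
        = if i + i' = p then (1 : ZMod p) else 0 := by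
    intro i hi i' hi'
    simp only [mem_Ico] at hi hi'
    rw [coeff_X_pow_mul']
    have hadd : p * i + p * i' = p * (i + i') := (Nat.mul_add p i i').symm
    by_cases hs : i + i' = p
    · have hn : p * i + p * i' = p ^ 2 := by rw [hadd, hs, hsq]
      have hle : p * i + p * i' ≤ p ^ 2 + p := by rw [hn]; exact Nat.le_add_right _ _
      rw [if_pos hle, if_pos hs, hn, Nat.add_sub_cancel_left, hUp]
    · rcases lt_or_gt_of_ne hs with h | h
      · -- i + i' < p : exponent too small, coefficient index ≥ 2p
        have hle2 : p * (i + i') + 2 * p ≤ p * p + p := by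
          have h2 : (i + i') + 2 ≤ p + 1 := by omega
          calc p * (i + i') + 2 * p = p * ((i + i') + 2) := by ring
            _ ≤ p * (p + 1) := Nat.mul_le_mul_left p h2
            _ = p * p + p := by ring
        have hle : p * i + p * i' ≤ p ^ 2 + p := by
          rw [hadd, hsq]
          have := Nat.le_add_right (p * (i + i')) (2 * p)
          omega
        rw [if_pos hle, if_neg hs, hU0]
        right
        apply Nat.le_sub_of_add_le
        rw [hadd, hsq]
        omega
      · -- i + i' > p
        by_cases hle : p * i + p * i' ≤ p ^ 2 + p
        · have hge : p ^ 2 + p ≤ p * i + p * i' := by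
            rw [hadd, hsq]
            have h2 : p * (p + 1) ≤ p * (i + i') := Nat.mul_le_mul_left p (by omega)
            have h3 : p * (p + 1) = p * p + p := by ring
            omega
          rw [if_pos hle, if_neg hs, hU0]
          left
          omega
        · rw [if_neg hle, if_neg hs]
  have hsum : ∀ i ∈ Finset.Ico 1 p,
      (∑ i' ∈ Finset.Ico 1 p, X ^ (p * i + p * i') * U).coeff (p ^ 2 + p) = 1 := by
    intro i hi
    rw [finset_sum_coeff, Finset.sum_congr rfl (fun i' hi' => hterm i hi i' hi')]
    have hi2 := Finset.mem_Ico.mp hi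
    have hcongr : ∀ i' ∈ Finset.Ico 1 p,
        (if i + i' = p then (1 : ZMod p) else 0) = if i' = p - i then 1 else 0 := by
      intro i' hi'
      simp only [mem_Ico] at hi'
      by_cases h : i + i' = p
      · rw [if_pos h, if_pos (by omega)]
      · rw [if_neg h, if_neg (by omega)]
    rw [Finset.sum_congr rfl hcongr, Finset.sum_ite_eq' (Finset.Ico 1 p) (p - i)
      (fun _ => (1 : ZMod p))]
    rw [if_pos (by simp only [mem_Ico]; omega)]
  rw [Finset.sum_congr rfl hsum, Finset.sum_const, Nat.card_Ico, nsmul_eq_mul, mul_one]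
  have : ((p - 1 : ℕ) : ZMod p) = ((p : ℕ) : ZMod p) - 1 := by
    push_cast [Nat.cast_sub (by omega : 1 ≤ p)]
    ring
  rw [this, ZMod.natCast_self]
  ring

end Aux

theorem v_p_sq_p_add (p : ℕ) (hp : p.Prime) :
    v (p ^ 2 + p + 1) ≡ -1 [ZMOD (p : ℤ)] ∧ v (p ^ 2 + p + 2) ≡ -1 [ZMOD (p : ℤ)] := by
  haveI hpf : Fact p.Prime := ⟨hp⟩
  have hp2 : 2 ≤ p := hp.two_le
  have hred : ∀ n : ℕ, n ≠ 0 → (v n : ZMod p)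
      = ((1 - X) * ∏ j ∈ Finset.range (2 * n - 2),
          (C ((((2 * n : ℤ) - 3 : ℤ) : ZMod p) - (j : ZMod p))
            + C ((j : ZMod p)) * X)).coeff (n - 1) := by
    intro n hn
    rw [v, if_neg hn]
    have hmap : (((( 1 - X) * ∏ j ∈ Finset.range (2 * n - 2),
        (C ((2 * n : ℤ) - 3 - (j : ℤ)) + C (j : ℤ) * X)).coeff (n - 1) : ℤ) : ZMod p)
        = (((1 - X) * ∏ j ∈ Finset.range (2 * n - 2),
            (C ((2 * n : ℤ) - 3 - (j : ℤ)) + C (j : ℤ) * X)).map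
              (Int.castRingHom (ZMod p))).coeff (n - 1) := by
      rw [Polynomial.coeff_map]
      rfl
    rw [hmap]
    congr 1
    rw [Polynomial.map_mul, Polynomial.map_prod]
    congr 1
    · simp
    · apply Finset.prod_congr rfl
      intro j _
      rw [Polynomial.map_add, Polynomial.map_mul, Polynomial.map_C, Polynomial.map_C,
        Polynomial.map_X]
      simp only [eq_intCast]
      have e1 : (((2 * (n : ℤ) - 3 - (j : ℤ)) : ℤ) : ZMod p)
          = (((2 * (n : ℤ) - 3 : ℤ)) : ZMod p) - (j : ZMod p) := by
        push_cast
        ring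
      have e2 : (((j : ℤ)) : ZMod p) = (j : ZMod p) := by
        push_cast
        ring
      rw [e1, e2]
  constructor
  · -- n = p ^ 2 + p + 1
    have hne : p ^ 2 + p + 1 ≠ 0 := by positivity
    rw [← ZMod.intCast_eq_intCast_iff]
    have hgoal := hred (p ^ 2 + p + 1) hne
    have hcval : ((2 * ((p ^ 2 + p + 1 : ℕ) : ℤ) - 3 : ℤ) : ZMod p) = -1 := by
      push_cast [ZMod.natCast_self]
      ring
    rw [hcval] at hgoal
    have hrange : 2 * (p ^ 2 + p + 1) - 2 = p * (2 * p + 2) := by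
      have h : 2 * (p ^ 2 + p + 1) = p * (2 * p + 2) + 2 := by ring
      rw [h, Nat.add_sub_cancel]
    rw [hrange] at hgoal
    have hcne : ((-1 : ZMod p)) ≠ 0 := by
      intro h
      exact one_ne_zero (by linear_combination -h : (1 : ZMod p) = 0)
    rw [prod_blocks p hcne (2 * p + 2)] at hgoal
    have hsimp : (C (-(-1 : ZMod p)) * Bp p) ^ (2 * p + 2) = (Bp p) ^ (2 * p + 2) := by
      rw [neg_neg, C_1, one_mul]
    rw [hsimp] at hgoal
    have hidx : p ^ 2 + p + 1 - 1 = p ^ 2 + p := by omega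
    rw [hidx, main_coeff p] at hgoal
    rw [hgoal]
    push_cast
    ring
  · -- n = p ^ 2 + p + 2
    have hne : p ^ 2 + p + 2 ≠ 0 := by positivity
    rw [← ZMod.intCast_eq_intCast_iff]
    have hgoal := hred (p ^ 2 + p + 2) hne
    have hcval : ((2 * ((p ^ 2 + p + 2 : ℕ) : ℤ) - 3 : ℤ) : ZMod p) = 1 := by
      push_cast [ZMod.natCast_self]
      ring
    rw [hcval] at hgoal
    have hrange : 2 * (p ^ 2 + p + 2) - 2 = p * (2 * p + 2) + 2 := by
      have h : 2 * (p ^ 2 + p + 2) = (p * (2 * p + 2) + 2) + 2 := by ring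
      rw [h, Nat.add_sub_cancel]
    rw [hrange, Finset.prod_range_add] at hgoal
    have hcne : ((1 : ZMod p)) ≠ 0 := one_ne_zero
    rw [prod_blocks p hcne (2 * p + 2)] at hgoal
    have htail : (∏ i ∈ Finset.range 2,
        (C ((1 : ZMod p) - ((p * (2 * p + 2) + i : ℕ) : ZMod p))
          + C (((p * (2 * p + 2) + i : ℕ) : ZMod p)) * X)) = X := by
      rw [Finset.prod_range_succ, Finset.prod_range_one]
      have h0 : ((p * (2 * p + 2) + 0 : ℕ) : ZMod p) = 0 := by
        push_cast [ZMod.natCast_self]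
        ring
      have h1 : ((p * (2 * p + 2) + 1 : ℕ) : ZMod p) = 1 := by
        push_cast [ZMod.natCast_self]
        ring
      rw [h0, h1]
      simp
    rw [htail] at hgoal
    have hsign : (C (-(1 : ZMod p)) * Bp p) ^ (2 * p + 2) = (Bp p) ^ (2 * p + 2) := by
      rw [mul_pow, ← C_pow]
      have : (-(1 : ZMod p)) ^ (2 * p + 2) = 1 := Even.neg_one_pow ⟨p + 1, by ring⟩
      rw [this, C_1, one_mul]
    rw [hsign] at hgoal
    have hassoc : ((1 : (ZMod p)[X]) - X) * ((Bp p) ^ (2 * p + 2) * X)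
        = X * ((1 - X) * (Bp p) ^ (2 * p + 2)) := by ring
    rw [hassoc] at hgoal
    have hidx : p ^ 2 + p + 2 - 1 = (p ^ 2 + p) + 1 := by omega
    rw [hidx, Polynomial.coeff_X_mul, main_coeff p] at hgoal
    rw [hgoal]
    push_cast
    ring
end
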